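/- Let G be a connected locally finite graph. If G admits a non-constant harmonic function of finite Dirichlet energy, then G admits a non-constant bounded harmonic function of finite Dirichlet energy. -/

import Mathlib

open scoped Classical

noncomputable section

/-- `h` is harmonic on `G`: `deg(v)·h(v) = Σ_{u∼v} h(u)` for every `v`. -/
def HarmonicOn {V : Type*} (G : SimpleGraph V) [∀ u : V, Fintype (G.neighborSet u)]
    (h : V → ℝ) : Prop :=
  ∀ u : V, (G.degree u : ℝ) * h u = ∑ w ∈ G.neighborFinset u, h w

/-- `h` has finite Dirichlet energy: `(1/2)·Σ over oriented edges of (h(e⁻)−h(e⁺))² < ∞`. -/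
def FiniteDirichletEnergy {V : Type*} (G : SimpleGraph V) (h : V → ℝ) : Prop :=
  Summable (fun p : V × V => if G.Adj p.1 p.2 then (h p.1 - h p.2) ^ 2 else 0)

set_option linter.unusedSectionVars false
set_option linter.unnecessarySeqFocus false
set_option maxHeartbeats 1200000

namespace BHDaux

def tc (c s : ℝ) : ℝ := max (-c) (min s c)

lemma abs_tc_le {c : ℝ} (hc : 0 ≤ c) (s : ℝ) : |tc c s| ≤ c := by
  rw [abs_le]; constructor
  · exact le_max_left _ _
  · exact max_le (by linarith) (min_le_right _ _)

lemma tc_eq {c s : ℝ} (hs : |s| ≤ c) : tc c s = s := by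
  rw [abs_le] at hs
  rw [tc, min_eq_left hs.2, max_eq_right hs.1]

lemma tc_lip (c a b : ℝ) : |tc c a - tc c b| ≤ |a - b| := by
  unfold tc
  rw [abs_le]
  constructor <;>
  · rcases le_total a b with hab | hab <;>
    rcases abs_cases (a - b) with ⟨he, h0⟩ | ⟨he, h0⟩ <;>
    rw [he] <;>
    simp only [min_def, max_def] <;> split_ifs <;> linarith

lemma tc_mono (c : ℝ) {a b : ℝ} (hab : a ≤ b) : tc c a ≤ tc c b :=
  max_le_max le_rfl (min_le_min hab le_rfl)

lemma sq_tc_le (c a b : ℝ) : (tc c a - tc c b) ^ 2 ≤ (a - b) ^ 2 := by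
  have := tc_lip c a b
  have h2 := pow_le_pow_left₀ (abs_nonneg _) this 2
  rwa [sq_abs, sq_abs] at h2

lemma summable_mul_of_sq {ι : Type*} {f g : ι → ℝ} (hf : Summable fun i => f i ^ 2)
    (hg : Summable fun i => g i ^ 2) : Summable fun i => f i * g i := by
  rw [← summable_abs_iff]
  have h : ∀ i, |f i * g i| ≤ (f i ^ 2 + g i ^ 2) / 2 := by
    intro i
    rw [abs_mul]
    nlinarith [sq_nonneg (|f i| - |g i|), sq_abs (f i), sq_abs (g i),
      abs_nonneg (f i), abs_nonneg (g i)]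
  exact Summable.of_nonneg_of_le (fun i => abs_nonneg _) h ((hf.add hg).div_const 2)

lemma tsum_cs {ι : Type*} {f g : ι → ℝ} (hf : Summable fun i => f i ^ 2)
    (hg : Summable fun i => g i ^ 2) :
    |∑' i, f i * g i| ≤ Real.sqrt (∑' i, f i ^ 2) * Real.sqrt (∑' i, g i ^ 2) := by
  have hs := summable_mul_of_sq hf hg
  have habs : Summable fun i => |f i * g i| := by
    rw [summable_abs_iff]; exact hs
  have step1 : |∑' i, f i * g i| ≤ ∑' i, |f i * g i| := by
    have := norm_tsum_le_tsum_norm (f := fun i => f i * g i)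
      (by simpa only [Real.norm_eq_abs] using habs)
    simpa only [Real.norm_eq_abs] using this
  refine step1.trans ?_
  refine Summable.tsum_le_of_sum_le habs fun s => ?_
  have h1 : (∑ i ∈ s, |f i * g i|) ^ 2 ≤ (∑ i ∈ s, f i ^ 2) * (∑ i ∈ s, g i ^ 2) := by
    have := Finset.sum_mul_sq_le_sq_mul_sq s (fun i => |f i|) (fun i => |g i|)
    simpa [abs_mul, sq_abs] using this
  have h2 : (∑ i ∈ s, f i ^ 2) ≤ ∑' i, f i ^ 2 := Summable.sum_le_tsum s (fun i _ => sq_nonneg _) hf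
  have h3 : (∑ i ∈ s, g i ^ 2) ≤ ∑' i, g i ^ 2 := Summable.sum_le_tsum s (fun i _ => sq_nonneg _) hg
  have h0 : 0 ≤ ∑ i ∈ s, |f i * g i| := Finset.sum_nonneg fun i _ => abs_nonneg _
  calc (∑ i ∈ s, |f i * g i|) = Real.sqrt ((∑ i ∈ s, |f i * g i|) ^ 2) :=
        (Real.sqrt_sq h0).symm
    _ ≤ Real.sqrt ((∑' i, f i ^ 2) * (∑' i, g i ^ 2)) := by
        apply Real.sqrt_le_sqrt
        refine h1.trans (mul_le_mul h2 h3 (Finset.sum_nonneg fun i _ => sq_nonneg _)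
          (tsum_nonneg fun i => sq_nonneg _))
    _ = _ := Real.sqrt_mul (tsum_nonneg fun i => sq_nonneg _) _

lemma exists_adj_ne {V : Type*} (G : SimpleGraph V) (hconn : G.Connected) {h : V → ℝ}
    (hnc : ¬ ∀ u w : V, h u = h w) : ∃ u v : V, G.Adj u v ∧ h u ≠ h v := by
  by_contra hcon
  push_neg at hcon
  apply hnc
  intro u w
  obtain ⟨p⟩ := hconn.preconnected u w
  induction p with
  | nil => rfl
  | cons hadj _ ih => exact (hcon _ _ hadj).trans ih


section Graph

variable {V : Type*} (G : SimpleGraph V) [∀ u : V, Fintype (G.neighborSet u)]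

def gd (k : V → ℝ) : V × V → ℝ := fun p => if G.Adj p.1 p.2 then k p.1 - k p.2 else 0

/-- energy summand -/
def en (k : V → ℝ) : V × V → ℝ := fun p => if G.Adj p.1 p.2 then (k p.1 - k p.2) ^ 2 else 0

lemma en_eq_sq (k : V → ℝ) (p : V × V) : en G k p = (gd G k p) ^ 2 := by
  by_cases hadj : G.Adj p.1 p.2 <;> simp [en, gd, hadj]

lemma en_nonneg (k : V → ℝ) (p : V × V) : 0 ≤ en G k p := by
  rw [en_eq_sq]; positivity

/-- truncation -/
lemma en_tc_le (c : ℝ) (k : V → ℝ) (p : V × V) :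
    en G (fun x => tc c (k x)) p ≤ en G k p := by
  by_cases hadj : G.Adj p.1 p.2 <;> simp [en, hadj]
  exact sq_tc_le c _ _

def nbhd (A : Finset V) : Finset V := A ∪ A.biUnion (fun x => G.neighborFinset x)

def pset (A : Finset V) : Finset (V × V) := (nbhd G A) ×ˢ (nbhd G A)

lemma mem_nbhd_self {A : Finset V} {x : V} (hx : x ∈ A) : x ∈ nbhd G A :=
  Finset.mem_union_left _ hx

lemma mem_nbhd_adj {A : Finset V} {x y : V} (hx : x ∈ A) (hxy : G.Adj x y) :
    y ∈ nbhd G A :=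
  Finset.mem_union_right _ (Finset.mem_biUnion.2 ⟨x, hx, (G.mem_neighborFinset x y).2 hxy⟩)

lemma nf_subset_nbhd {A : Finset V} {x : V} (hx : x ∈ A) :
    G.neighborFinset x ⊆ nbhd G A := by
  intro y hy
  exact mem_nbhd_adj G hx ((G.mem_neighborFinset x y).1 hy)

lemma mem_pset_of_adj {A : Finset V} {p : V × V} (hadj : G.Adj p.1 p.2)
    (hp : p.1 ∈ A ∨ p.2 ∈ A) : p ∈ pset G A := by
  rcases hp with hp | hp
  · exact Finset.mem_product.2 ⟨mem_nbhd_self G hp, mem_nbhd_adj G hp hadj⟩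
  · exact Finset.mem_product.2 ⟨mem_nbhd_adj G hp hadj.symm, mem_nbhd_self G hp⟩

/-- if `k = k'` off `A`, the energy summands agree off `pset A` -/
lemma en_congr_off {A : Finset V} {k k' : V → ℝ} (hk : ∀ x ∉ A, k x = k' x)
    {p : V × V} (hp : p ∉ pset G A) : en G k p = en G k' p := by
  by_cases hadj : G.Adj p.1 p.2
  · have h1 : p.1 ∉ A := fun h => hp (mem_pset_of_adj G hadj (Or.inl h))
    have h2 : p.2 ∉ A := fun h => hp (mem_pset_of_adj G hadj (Or.inr h))
    simp [en, hadj, hk _ h1, hk _ h2]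
  · simp [en, hadj]

lemma gd_eq_zero_off {A : Finset V} {w : V → ℝ} (hw : ∀ x ∉ A, w x = 0)
    {p : V × V} (hp : p ∉ pset G A) : gd G w p = 0 := by
  by_cases hadj : G.Adj p.1 p.2
  · have h1 : p.1 ∉ A := fun h => hp (mem_pset_of_adj G hadj (Or.inl h))
    have h2 : p.2 ∉ A := fun h => hp (mem_pset_of_adj G hadj (Or.inr h))
    simp [gd, hadj, hw _ h1, hw _ h2]
  · simp [gd, hadj]

/-- The key summation-by-parts identity. -/
lemma sum_gd_mul_gd (k w : V → ℝ) (A : Finset V) (hw : ∀ x ∉ A, w x = 0) :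
    ∑ p ∈ pset G A, gd G k p * gd G w p
      = ∑ x ∈ A, w x * (2 * ((G.degree x : ℝ) * k x - ∑ y ∈ G.neighborFinset x, k y)) := by
  set B := nbhd G A with hB
  have step1 : ∑ p ∈ pset G A, gd G k p * gd G w p
      = ∑ x ∈ B, ∑ y ∈ B, (if G.Adj x y then (k x - k y) * (w x - w y) else 0) := by
    rw [pset, Finset.sum_product]
    refine Finset.sum_congr rfl fun x _ => Finset.sum_congr rfl fun y _ => ?_
    by_cases hadj : G.Adj x y <;> simp [gd, hadj]
  have step2 : ∀ x y, (if G.Adj x y then (k x - k y) * (w x - w y) else 0)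
      = w x * (if G.Adj x y then k x - k y else 0)
        - w y * (if G.Adj x y then k x - k y else 0) := by
    intro x y; by_cases hadj : G.Adj x y <;> simp [hadj] <;> ring
  rw [step1]
  simp only [step2]
  simp only [Finset.sum_sub_distrib]
  -- second double sum: swap order
  rw [Finset.sum_comm (s := B) (t := B)
    (f := fun x y => w y * (if G.Adj x y then k x - k y else 0))]
  rw [← Finset.sum_sub_distrib]
  simp only [← Finset.mul_sum]
  simp only [← mul_sub]
  have hsub : A ⊆ B := fun x hx => mem_nbhd_self G hx
  rw [← Finset.sum_subset hsub (by
    intro x _ hxA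
    rw [hw x hxA, zero_mul])]
  refine Finset.sum_congr rfl fun x hx => ?_
  congr 1
  have hN : G.neighborFinset x ⊆ B := nf_subset_nbhd G hx
  have e1 : ∑ y ∈ B, (if G.Adj x y then k x - k y else 0)
      = (G.degree x : ℝ) * k x - ∑ y ∈ G.neighborFinset x, k y := by
    rw [← Finset.sum_subset hN (by
      intro y _ hyN
      rw [if_neg (fun hadj => hyN ((G.mem_neighborFinset x y).2 hadj))])]
    rw [Finset.sum_congr rfl (fun y hy => if_pos ((G.mem_neighborFinset x y).1 hy)),
      Finset.sum_sub_distrib, Finset.sum_const, nsmul_eq_mul]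
    congr 2
  have e2 : ∑ y ∈ B, (if G.Adj y x then k y - k x else 0)
      = (∑ y ∈ G.neighborFinset x, k y) - (G.degree x : ℝ) * k x := by
    rw [← Finset.sum_subset hN (by
      intro y _ hyN
      rw [if_neg (fun hadj => hyN ((G.mem_neighborFinset x y).2 hadj.symm))])]
    rw [Finset.sum_congr rfl (fun y hy => if_pos ((G.mem_neighborFinset x y).1 hy).symm),
      Finset.sum_sub_distrib, Finset.sum_const, nsmul_eq_mul]
    congr 2
  rw [e1, e2]
  ring

def SS (A : Finset V) (k : V → ℝ) : ℝ := ∑ p ∈ pset G A, en G k p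

lemma gd_add (k k' : V → ℝ) (p : V × V) :
    gd G (fun x => k x + k' x) p = gd G k p + gd G k' p := by
  by_cases hadj : G.Adj p.1 p.2 <;> simp [gd, hadj] ; ring

lemma SS_perturb (A : Finset V) (k δf : V → ℝ) (t : ℝ) :
    SS G A (fun x => k x + t * δf x)
      = SS G A k + 2 * t * (∑ p ∈ pset G A, gd G k p * gd G δf p)
        + t ^ 2 * (∑ p ∈ pset G A, (gd G δf p) ^ 2) := by
  unfold SS
  rw [Finset.mul_sum, Finset.mul_sum, ← Finset.sum_add_distrib, ← Finset.sum_add_distrib]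
  refine Finset.sum_congr rfl fun p _ => ?_
  by_cases hadj : G.Adj p.1 p.2 <;> simp [en, gd, hadj] ; ring

/-- a minimizer of the local energy is harmonic on `A` -/
lemma min_harmonic (A : Finset V) (hc : V → ℝ) (k : V → ℝ)
    (hk : ∀ x ∉ A, k x = hc x)
    (hmin : ∀ k' : V → ℝ, (∀ x ∉ A, k' x = hc x) → SS G A k ≤ SS G A k')
    {x : V} (hx : x ∈ A) :
    (G.degree x : ℝ) * k x = ∑ y ∈ G.neighborFinset x, k y := by
  set δf : V → ℝ := fun y => if y = x then (1:ℝ) else 0 with hδ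
  set b : ℝ := ∑ p ∈ pset G A, gd G k p * gd G δf p with hb
  set a : ℝ := ∑ p ∈ pset G A, (gd G δf p) ^ 2 with ha
  have ha0 : 0 ≤ a := Finset.sum_nonneg fun p _ => sq_nonneg _
  have key : ∀ t : ℝ, 0 ≤ 2 * t * b + t ^ 2 * a := by
    intro t
    have h1 := hmin (fun y => k y + t * δf y) (by
      intro y hy
      have : δf y = 0 := by
        rw [hδ]; simp only [ite_eq_right_iff]
        intro hyx; exact absurd (hyx ▸ hy) (fun h => h hx)
      show k y + t * δf y = hc y
      rw [this, mul_zero, add_zero]; exact hk y hy)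
    rw [SS_perturb] at h1
    linarith
  have hb0 : b = 0 := by
    by_contra hbne
    have h1 := key (-(b / (a + 1)))
    have hpos : (0:ℝ) < a + 1 := by linarith
    have hb2 : 0 < b ^ 2 := by positivity
    rw [div_eq_mul_inv] at h1
    have h2 : 0 ≤ (2 * (-(b * (a+1)⁻¹)) * b + (-(b * (a+1)⁻¹)) ^ 2 * a) * (a+1)^2 :=
      mul_nonneg h1 (by positivity)
    have h3 : (2 * (-(b * (a+1)⁻¹)) * b + (-(b * (a+1)⁻¹)) ^ 2 * a) * (a+1)^2
        = -(b^2) * (a + 2) := by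
      field_simp
      ring
    rw [h3] at h2
    nlinarith
  have hδsupp : ∀ y ∉ A, δf y = 0 := by
    intro y hy
    rw [hδ]; simp only [ite_eq_right_iff]
    intro hyx; exact absurd (hyx ▸ hy) (fun hcon => hcon hx)
  rw [sum_gd_mul_gd G k δf A hδsupp] at hb
  rw [Finset.sum_eq_single_of_mem x hx (by
    intro y _ hyx
    rw [hδ]; simp [hyx]) ] at hb
  simp only [hδ, if_pos rfl, one_mul] at hb
  have h5 := hb0
  rw [hb] at h5
  linarith
/-- the guarded-difference linear map into the Euclidean space on `pset A` -/
def Phi (A : Finset V) : (V → ℝ) →ₗ[ℝ] EuclideanSpace ℝ {p // p ∈ pset G A} where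
  toFun k := WithLp.toLp 2 (fun i => gd G k i.1)
  map_add' k k' := by
    ext i
    by_cases hadj : G.Adj i.1.1 i.1.2 <;>
      simp [gd, hadj, EuclideanSpace, PiLp.add_apply] <;> ring
  map_smul' c k := by
    ext i
    by_cases hadj : G.Adj i.1.1 i.1.2 <;>
      simp [gd, hadj, PiLp.smul_apply, smul_eq_mul] <;> ring

lemma norm_Phi_sq (A : Finset V) (k : V → ℝ) :
    ‖Phi G A k‖ ^ 2 = SS G A k := by
  rw [EuclideanSpace.norm_eq, Real.sq_sqrt (by positivity)]
  unfold SS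
  rw [← Finset.sum_attach (pset G A) (fun p => en G k p)]
  refine Finset.sum_congr rfl fun i _ => ?_
  show ‖gd G k i.1‖ ^ 2 = en G k i.1
  rw [Real.norm_eq_abs, sq_abs]
  by_cases hadj : G.Adj i.1.1 i.1.2 <;> simp [gd, en, hadj]

/-- extension-by-zero linear map -/
def extz (A : Finset V) : EuclideanSpace ℝ {x // x ∈ A} →ₗ[ℝ] (V → ℝ) where
  toFun f := fun x => if hx : x ∈ A then f ⟨x, hx⟩ else 0
  map_add' f f' := by funext x; by_cases hx : x ∈ A <;> simp [hx]
  map_smul' c f := by funext x; by_cases hx : x ∈ A <;> simp [hx]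

/-- Existence of a bounded local-energy minimizer with boundary data `hc`. -/
lemma exists_min (hc : V → ℝ) (c : ℝ) (hc0 : 0 ≤ c) (hbc : ∀ x, |hc x| ≤ c) (A : Finset V) :
    ∃ k : V → ℝ, (∀ x ∉ A, k x = hc x) ∧ (∀ x, |k x| ≤ c) ∧
      ∀ k' : V → ℝ, (∀ x ∉ A, k' x = hc x) → SS G A k ≤ SS G A k' := by
  set z : V → ℝ := fun x => if x ∈ A then 0 else hc x with hz
  set L : EuclideanSpace ℝ {x // x ∈ A} →ₗ[ℝ] EuclideanSpace ℝ {p // p ∈ pset G A} :=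
    (Phi G A).comp (extz A) with hL
  set K : Submodule ℝ (EuclideanSpace ℝ {p // p ∈ pset G A}) := LinearMap.range L with hK
  set C : EuclideanSpace ℝ {p // p ∈ pset G A} := Phi G A z with hC
  have hproj : ‖-C - ((K.orthogonalProjectionOnto (-C) : K) : EuclideanSpace ℝ {p // p ∈ pset G A})‖
      = ⨅ x : K, ‖-C - (x : EuclideanSpace ℝ {p // p ∈ pset G A})‖ := Submodule.starProjection_minimal (U := K) (-C)
  obtain ⟨f₀, hf₀⟩ := LinearMap.mem_range.1 (K.orthogonalProjectionOnto (-C)).2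
  -- minimality over all f
  have hmin0 : ∀ f : EuclideanSpace ℝ {x // x ∈ A},
      ‖-C - L f₀‖ ≤ ‖-C - L f‖ := by
    intro f
    rw [hf₀, hproj]
    have hbdd : BddBelow (Set.range fun x : K =>
        ‖-C - (x : EuclideanSpace ℝ {p // p ∈ pset G A})‖) := by
      refine ⟨0, ?_⟩
      rintro r ⟨w, rfl⟩
      exact norm_nonneg _
    exact ciInf_le hbdd ⟨L f, LinearMap.mem_range.2 ⟨f, rfl⟩⟩
  -- translate to SS
  have key : ∀ f : EuclideanSpace ℝ {x // x ∈ A},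
      SS G A (fun x => extz A f₀ x + z x) ≤ SS G A (fun x => extz A f x + z x) := by
    intro f
    have e : ∀ f' : EuclideanSpace ℝ {x // x ∈ A},
        SS G A (fun x => extz A f' x + z x) = ‖-C - L f'‖ ^ 2 := by
      intro f'
      have : (fun x => extz A f' x + z x) = (extz A f' + z : V → ℝ) := rfl
      rw [this, ← norm_Phi_sq, map_add]
      have : (Phi G A) (extz A f') + (Phi G A) z = -((-C) - L f') := by
        simp [hL, hC, LinearMap.comp_apply]
      rw [this, norm_neg]
    rw [e, e]
    have h1 := hmin0 f
    exact pow_le_pow_left₀ (norm_nonneg _) h1 2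
  set k₀ : V → ℝ := fun x => extz A f₀ x + z x with hk₀
  have hbd : ∀ x ∉ A, k₀ x = hc x := by
    intro x hx
    simp [hk₀, extz, hz, dif_neg hx, if_neg hx]
  refine ⟨fun x => tc c (k₀ x), ?_, ?_, ?_⟩
  · intro x hx
    show tc c (k₀ x) = hc x
    rw [hbd x hx]
    exact tc_eq (hbc x)
  · intro x; exact abs_tc_le hc0 _
  · intro k' hk'
    have hstep1 : SS G A (fun x => tc c (k₀ x)) ≤ SS G A k₀ :=
      Finset.sum_le_sum fun p _ => en_tc_le G c k₀ p
    refine hstep1.trans ?_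
    -- express k' as extz f' + z
    set f' : EuclideanSpace ℝ {x // x ∈ A} := WithLp.toLp 2 (fun i => k' i.1) with hf'
    have : (fun x => extz A f' x + z x) = k' := by
      funext x
      by_cases hx : x ∈ A
      · simp [extz, hf', hz, dif_pos hx, if_pos hx]
      · simp [extz, hf', hz, dif_neg hx, if_neg hx, hk' x hx]
    calc SS G A k₀ ≤ SS G A (fun x => extz A f' x + z x) := key f'
    _ = SS G A k' := by rw [this]

end Graph

end BHDaux

section Main
open BHDaux Filter Topology

/-- If a connected locally finite graph admits a non-constant harmonic
function of finite Dirichlet energy, then it admits a non-constant *bounded* harmonic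
function of finite Dirichlet energy. -/
theorem harmonic_dirichlet_to_bounded_harmonic_dirichlet
    {V : Type*} (G : SimpleGraph V) [∀ u : V, Fintype (G.neighborSet u)]
    (hconn : G.Connected)
    (h : V → ℝ)
    (hharm : HarmonicOn G h)
    (hfin : FiniteDirichletEnergy G h)
    (hnc : ¬ (∀ u w : V, h u = h w)) :
    ∃ h' : V → ℝ,
      HarmonicOn G h' ∧
      (∃ C : ℝ, ∀ u, |h' u| ≤ C) ∧
      FiniteDirichletEnergy G h' ∧
      ¬ (∀ u w : V, h' u = h' w) := by
  obtain ⟨u, v, huv, hune⟩ := exists_adj_ne G hconn hnc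
  set c : ℝ := max |h u| |h v| + 1 with hcdef
  have hc0 : (0:ℝ) ≤ c := by positivity
  set hcf : V → ℝ := fun x => tc c (h x) with hhcf
  have hbc : ∀ x, |hcf x| ≤ c := fun x => abs_tc_le hc0 _
  have hSh : Summable (en G h) := hfin
  have hShc : Summable (en G hcf) :=
    Summable.of_nonneg_of_le (fun p => en_nonneg G hcf p) (fun p => en_tc_le G c h p) hSh
  set T : ℝ := ∑' p, en G hcf p with hTdef
  -- minimizers for each finite set
  choose m hm1 hm2 hm3 using fun A : Finset V => exists_min G hcf c hc0 hbc A
  have hsum_m : ∀ A, Summable (en G (m A)) := by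
    intro A
    have hdiff : ∀ p ∉ pset G A, en G (m A) p - en G hcf p = 0 := fun p hp => by
      rw [en_congr_off G (hm1 A) hp, sub_self]
    have h1 : Summable (fun p => en G (m A) p - en G hcf p) :=
      summable_of_ne_finset_zero hdiff
    have h2 := h1.add hShc
    simpa using h2
  have hen_m_le : ∀ A, ∑' p, en G (m A) p ≤ T := by
    intro A
    have hsplit : SS G A (m A) + ∑' (p : {p // p ∉ pset G A}), en G (m A) ↑p
        = ∑' p, en G (m A) p := Summable.sum_add_tsum_compl (s := pset G A) (hsum_m A)
    have hsplit2 : SS G A hcf + ∑' (p : {p // p ∉ pset G A}), en G hcf ↑p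
        = ∑' p, en G hcf p := Summable.sum_add_tsum_compl (s := pset G A) hShc
    have htail : ∑' (p : {p // p ∉ pset G A}), en G (m A) ↑p
        = ∑' (p : {p // p ∉ pset G A}), en G hcf ↑p :=
      tsum_congr fun p => en_congr_off G (hm1 A) p.2
    have hSSle : SS G A (m A) ≤ SS G A hcf := hm3 A hcf (fun x _ => rfl)
    rw [hTdef, ← hsplit, ← hsplit2, htail]
    exact add_le_add_left hSSle _
  -- the ultrafilter limit
  haveI : Nonempty V := hconn.nonempty
  obtain ⟨U, hU⟩ := Ultrafilter.exists_le (atTop : Filter (Finset V))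
  have hlim : ∀ x : V, ∃ r : ℝ, r ∈ Set.Icc (-c) c ∧
      Tendsto (fun A => m A x) (U : Filter (Finset V)) (𝓝 r) := by
    intro x
    have hmem : ↑(U.map fun A => m A x) ≤ Filter.principal (Set.Icc (-c) c) := by
      rw [Ultrafilter.coe_map]
      refine Filter.le_principal_iff.2 ?_
      refine Filter.eventually_map.2 (Filter.Eventually.of_forall fun A => ?_)
      exact Set.mem_Icc.2 (abs_le.1 (hm2 A x))
    obtain ⟨r, hr, hler⟩ := isCompact_Icc.ultrafilter_le_nhds (U.map fun A => m A x) hmem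
    refine ⟨r, hr, ?_⟩
    rwa [Ultrafilter.coe_map] at hler
  choose g hg1 hg2 using hlim
  have hev : ∀ x : V, ∀ᶠ A : Finset V in (U : Filter (Finset V)), x ∈ A := by
    intro x
    have h1 : ∀ᶠ A : Finset V in atTop, x ∈ A := by
      refine (Filter.eventually_ge_atTop ({x} : Finset V)).mono fun A hA => ?_
      exact hA (Finset.mem_singleton_self x)
    exact h1.filter_mono hU
  -- harmonicity of g
  have hgharm : HarmonicOn G g := by
    intro x
    have h1 : Tendsto (fun A => (G.degree x : ℝ) * m A x) (U : Filter (Finset V))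
        (𝓝 ((G.degree x : ℝ) * g x)) := (hg2 x).const_mul _
    have h2 : Tendsto (fun A => ∑ y ∈ G.neighborFinset x, m A y) (U : Filter (Finset V))
        (𝓝 (∑ y ∈ G.neighborFinset x, g y)) :=
      tendsto_finset_sum _ fun y _ => hg2 y
    have h3 : ∀ᶠ A : Finset V in (U : Filter (Finset V)),
        (G.degree x : ℝ) * m A x = ∑ y ∈ G.neighborFinset x, m A y :=
      (hev x).mono fun A hA => min_harmonic G A hcf (m A) (hm1 A) (hm3 A) hA
    exact tendsto_nhds_unique (h1.congr' h3) h2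
  -- boundedness
  have hgbd : ∀ x, |g x| ≤ c := fun x => abs_le.2 ⟨(hg1 x).1, (hg1 x).2⟩
  -- pointwise convergence of energy terms
  have hterm : ∀ p : V × V, Tendsto (fun A => en G (m A) p) (U : Filter (Finset V))
      (𝓝 (en G g p)) := by
    intro p
    by_cases hadj : G.Adj p.1 p.2
    · have h1 := ((hg2 p.1).sub (hg2 p.2)).pow 2
      have e : ∀ k : V → ℝ, en G k p = (k p.1 - k p.2) ^ 2 := fun k => by simp [en, hadj]
      simp only [e]
      exact h1
    · have e : ∀ k : V → ℝ, en G k p = 0 := fun k => by simp [en, hadj]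
      simp only [e]
      exact tendsto_const_nhds
  have hgterm : ∀ p : V × V, Tendsto (fun A => gd G (m A) p) (U : Filter (Finset V))
      (𝓝 (gd G g p)) := by
    intro p
    by_cases hadj : G.Adj p.1 p.2
    · have h1 := (hg2 p.1).sub (hg2 p.2)
      have e : ∀ k : V → ℝ, gd G k p = k p.1 - k p.2 := fun k => by simp [gd, hadj]
      simp only [e]
      exact h1
    · have e : ∀ k : V → ℝ, gd G k p = 0 := fun k => by simp [gd, hadj]
      simp only [e]
      exact tendsto_const_nhds
  -- finite Dirichlet energy of g
  have hgen_le : ∀ s : Finset (V × V), ∑ p ∈ s, en G g p ≤ T := by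
    intro s
    have hsum : Tendsto (fun A => ∑ p ∈ s, en G (m A) p) (U : Filter (Finset V))
        (𝓝 (∑ p ∈ s, en G g p)) := tendsto_finset_sum _ fun p _ => hterm p
    refine le_of_tendsto hsum (Filter.Eventually.of_forall fun A => ?_)
    exact (Summable.sum_le_tsum s (fun p _ => en_nonneg G _ p) (hsum_m A)).trans (hen_m_le A)
  have hgfin : Summable (en G g) :=
    summable_of_sum_le (fun p => en_nonneg G g p) hgen_le
  have hgen_total : ∑' p, en G g p ≤ T := Summable.tsum_le_of_sum_le hgfin hgen_le
  -- the inner products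
  have hsq : ∀ k : V → ℝ, (fun p : V × V => gd G k p ^ 2) = en G k :=
    fun k => funext fun p => (en_eq_sq G k p).symm
  have hip_summ : ∀ k : V → ℝ, Summable (en G k) →
      Summable (fun p => gd G h p * gd G k p) := by
    intro k hk
    exact summable_mul_of_sq (by rw [hsq]; exact hSh) (by rw [hsq]; exact hk)
  -- positivity of ⟨dh, dhcf⟩
  have hprodnn : ∀ p, 0 ≤ gd G h p * gd G hcf p := by
    intro p
    by_cases hadj : G.Adj p.1 p.2
    · have e1 : gd G h p = h p.1 - h p.2 := by simp [gd, hadj]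
      have e2 : gd G hcf p = tc c (h p.1) - tc c (h p.2) := by simp [gd, hadj, hhcf]
      rw [e1, e2]
      rcases le_total (h p.1) (h p.2) with hle | hle
      · have := tc_mono c hle
        nlinarith
      · have := tc_mono c hle
        nlinarith
    · simp [gd, hadj]
  have hpos : 0 < ∑' p, gd G h p * gd G hcf p := by
    refine Summable.tsum_pos (hip_summ hcf hShc) hprodnn (u, v) ?_
    have e1 : gd G h (u, v) = h u - h v := by simp [gd, huv]
    have e2 : gd G hcf (u, v) = tc c (h u) - tc c (h v) := by simp [gd, huv, hhcf]
    have hu1 : tc c (h u) = h u := tc_eq (by rw [hcdef]; have := le_max_left |h u| |h v|; linarith)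
    have hv1 : tc c (h v) = h v := tc_eq (by rw [hcdef]; have := le_max_right |h u| |h v|; linarith)
    rw [e1, e2, hu1, hv1, ← sq]
    have : h u - h v ≠ 0 := sub_ne_zero.2 hune
    positivity
  set c₀ : ℝ := ∑' p, gd G h p * gd G hcf p with hc₀def
  -- orthogonality: inner product with each minimizer equals c₀
  have hip_m : ∀ A, ∑' p, gd G h p * gd G (m A) p = c₀ := by
    intro A
    set w : V → ℝ := fun x => m A x - hcf x with hwdef
    have hwsupp : ∀ x ∉ A, w x = 0 := fun x hx => by
      rw [hwdef]; simp [hm1 A x hx]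
    have hsplit : ∀ p, gd G h p * gd G (m A) p
        = gd G h p * gd G hcf p + gd G h p * gd G w p := by
      intro p
      by_cases hadj : G.Adj p.1 p.2
      · simp only [gd, if_pos hadj, hwdef]
        ring
      · simp [gd, hadj]
    have hzero : ∀ p ∉ pset G A, gd G h p * gd G w p = 0 := fun p hp => by
      rw [gd_eq_zero_off G hwsupp hp, mul_zero]
    have hs2 : Summable (fun p => gd G h p * gd G w p) := summable_of_ne_finset_zero hzero
    calc ∑' p, gd G h p * gd G (m A) p
        = ∑' p, (gd G h p * gd G hcf p + gd G h p * gd G w p) := tsum_congr hsplit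
      _ = c₀ + ∑' p, gd G h p * gd G w p := Summable.tsum_add (hip_summ hcf hShc) hs2
      _ = c₀ := by
          rw [tsum_eq_sum hzero, sum_gd_mul_gd G h w A hwsupp, Finset.sum_eq_zero, add_zero]
          intro x _
          rw [show ((G.degree x : ℝ) * h x - ∑ y ∈ G.neighborFinset x, h y) = 0 by
            rw [hharm x]; ring]
          ring
  -- the limit inner product
  have hTnn : 0 ≤ T := by
    rw [hTdef]; exact tsum_nonneg fun p => en_nonneg G hcf p
  have hipg : ∑' p, gd G h p * gd G g p = c₀ := by
    have hkey : ∀ ε : ℝ, 0 < ε →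
        |(∑' p, gd G h p * gd G g p) - c₀| ≤ ε * (2 * Real.sqrt T + 1) := by
      intro ε hε
      -- find a finite set controlling the tail of en h
      obtain ⟨s, hs⟩ : ∃ s : Finset (V × V),
          ∑' (p : {p // p ∉ s}), en G h p < ε ^ 2 :=
        ((tendsto_order.1 (tendsto_tsum_compl_atTop_zero (en G h))).2 _ (by positivity)).exists
      -- tail bound for arbitrary k of energy ≤ T
      have tailb : ∀ k : V → ℝ, Summable (en G k) → (∑' p, en G k p ≤ T) →
          |∑' (p : {p // p ∉ s}), gd G h p * gd G k p| ≤ ε * Real.sqrt T := by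
        intro k hsk hkT
        have hf2 : Summable (fun p : {p // p ∉ s} => gd G h (p : V × V) ^ 2) := by
          have := (hsq h ▸ hSh : Summable fun p : V × V => gd G h p ^ 2)
          exact this.subtype _
        have hg2' : Summable (fun p : {p // p ∉ s} => gd G k (p : V × V) ^ 2) := by
          have := (hsq k ▸ hsk : Summable fun p : V × V => gd G k p ^ 2)
          exact this.subtype _
        have hcs := tsum_cs hf2 hg2'
        refine hcs.trans ?_
        have ht1 : ∑' (p : {p // p ∉ s}), gd G h (p : V × V) ^ 2 ≤ ε ^ 2 := by
          refine le_of_lt ?_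
          have : ∀ p : {p // p ∉ s}, gd G h (p : V × V) ^ 2 = en G h (p : V × V) :=
            fun p => (en_eq_sq G h _).symm
          rw [tsum_congr this]
          exact hs
        have ht2 : ∑' (p : {p // p ∉ s}), gd G k (p : V × V) ^ 2 ≤ T := by
          have e : ∀ p : {p // p ∉ s}, gd G k (p : V × V) ^ 2 = en G k (p : V × V) :=
            fun p => (en_eq_sq G k _).symm
          rw [tsum_congr e]
          have hsplit : (∑ p ∈ s, en G k p) + ∑' (p : {p // p ∉ s}), en G k ↑p
              = ∑' p, en G k p := Summable.sum_add_tsum_compl (s := s) hsk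
          have h0 : 0 ≤ ∑ p ∈ s, en G k p := Finset.sum_nonneg fun p _ => en_nonneg G k p
          linarith
        have hb1 : Real.sqrt (∑' (p : {p // p ∉ s}), gd G h (p : V × V) ^ 2) ≤ ε := by
          have h4 := Real.sqrt_le_sqrt ht1
          rwa [Real.sqrt_sq hε.le] at h4
        have hb2 : Real.sqrt (∑' (p : {p // p ∉ s}), gd G k (p : V × V) ^ 2)
            ≤ Real.sqrt T := Real.sqrt_le_sqrt ht2
        exact mul_le_mul hb1 hb2 (Real.sqrt_nonneg _) hε.le
      -- split the inner products at s
      have hsummg : Summable (fun p => gd G h p * gd G g p) := hip_summ g hgfin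
      have hfin_tendsto : Tendsto (fun A => ∑ p ∈ s, gd G h p * gd G (m A) p)
          (U : Filter (Finset V)) (𝓝 (∑ p ∈ s, gd G h p * gd G g p)) :=
        tendsto_finset_sum _ fun p _ => (hgterm p).const_mul (gd G h p)
      have hev2 := Metric.tendsto_nhds.1 hfin_tendsto ε hε
      obtain ⟨A, hA⟩ := hev2.exists
      rw [Real.dist_eq] at hA
      have htg := tailb g hgfin hgen_total
      have htA := tailb (m A) (hsum_m A) (hen_m_le A)
      have hipmA := hip_m A
      set X : ℝ := ∑ p ∈ s, gd G h p * gd G g p - ∑ p ∈ s, gd G h p * gd G (m A) p with hX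
      set Y : ℝ := ∑' (p : {p // p ∉ s}), gd G h (p : V × V) * gd G g (p : V × V) with hY
      set Z : ℝ := ∑' (p : {p // p ∉ s}), gd G h (p : V × V) * gd G (m A) (p : V × V) with hZ
      have hsg' : (∑ p ∈ s, gd G h p * gd G g p) + Y = ∑' p, gd G h p * gd G g p :=
        Summable.sum_add_tsum_compl (s := s) hsummg
      have hsA' : (∑ p ∈ s, gd G h p * gd G (m A) p) + Z
          = ∑' p, gd G h p * gd G (m A) p :=
        Summable.sum_add_tsum_compl (s := s) (hip_summ (m A) (hsum_m A))
      have hdecomp : (∑' p, gd G h p * gd G g p) - c₀ = X + Y - Z := by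
        rw [← hipmA, ← hsg', ← hsA', hX]; ring
      rw [hdecomp]
      have t2 : |Y - Z| ≤ |Y| + |Z| := by
        rw [sub_eq_add_neg]
        refine (abs_add_le _ _).trans ?_
        rw [abs_neg]
      have t1 : |X + Y - Z| ≤ |X| + (|Y| + |Z|) := by
        calc |X + Y - Z| = |X + (Y - Z)| := by ring_nf
          _ ≤ |X| + |Y - Z| := abs_add_le _ _
          _ ≤ |X| + (|Y| + |Z|) := add_le_add le_rfl t2
      refine t1.trans ?_
      have hXb : |X| ≤ ε := by
        rw [hX, abs_sub_comm]
        exact hA.le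
      nlinarith [Real.sqrt_nonneg T, htg, htA, hXb]
    -- conclude
    by_contra hne2
    set d : ℝ := |(∑' p, gd G h p * gd G g p) - c₀| with hdd
    have hd : 0 < d := abs_pos.2 (sub_ne_zero.2 hne2)
    set M : ℝ := 2 * Real.sqrt T + 1 with hM
    have hM0 : 0 < M := by positivity
    have hk := hkey (d / (2 * M)) (by positivity)
    have he : (d / (2 * M)) * M = d / 2 := by
      field_simp
    rw [he] at hk
    linarith
  -- nonconstancy of g
  have hgnc : ¬ ∀ x y : V, g x = g y := by
    intro hconst
    have hzero : ∀ p : V × V, gd G h p * gd G g p = 0 := by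
      intro p
      by_cases hadj : G.Adj p.1 p.2
      · simp [gd, hadj, hconst p.1 p.2]
      · simp [gd, hadj]
    rw [tsum_congr hzero, tsum_zero] at hipg
    rw [← hipg] at hpos
    exact lt_irrefl _ hpos
  exact ⟨g, hgharm, ⟨c, hgbd⟩, hgfin, hgnc⟩

end Main

end
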